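/- arXiv:1411.0425 — 2 statements merged into one kernel-verified Lean document; each statement's English description precedes it below -/
import Mathlib

section
/- Let Y be an octahedral Banach space and X a closed subspace of Y such that the quotient Y/X contains no isomorphic copy of ℓ₁. Then X is octahedral. -/
open TopologicalSpace Metric

def IsOctahedral (Y : Type*) [NormedAddCommGroup Y] [NormedSpace ℝ Y] : Prop :=
  ∀ ε : ℝ, 0 < ε → ∀ N : ℕ, ∀ y : Fin N → Y, (∀ n, ‖y n‖ = 1) →
    ∃ z : Y, ‖z‖ = 1 ∧ ∀ n, ‖y n - z‖ ≥ 2 - ε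

open ENNReal

lemma norm_add3_ge {Y : Type*} [NormedAddCommGroup Y] (A B C : Y) :
    ‖A‖ - ‖B‖ - ‖C‖ ≤ ‖A + B + C‖ := by
  have h1 : ‖A‖ ≤ ‖A + B + C‖ + ‖B‖ + ‖C‖ := by
    have e : A = A + B + C + -B + -C := by abel
    calc ‖A‖ = ‖A + B + C + -B + -C‖ := by rw [← e]
    _ ≤ ‖A + B + C + -B‖ + ‖-C‖ := norm_add_le _ _
    _ ≤ ‖A + B + C‖ + ‖-B‖ + ‖-C‖ := by
        have := norm_add_le (A + B + C) (-B); linarith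
    _ = ‖A + B + C‖ + ‖B‖ + ‖C‖ := by rw [norm_neg, norm_neg]
  linarith

-- the single-vector estimate
lemma est_aux {Y : Type*} [NormedAddCommGroup Y] [NormedSpace ℝ Y]
    {η : ℝ} (hη : 0 < η) {u w c : Y} (hc : ‖c‖ = 1) (hw : ‖w‖ = 1)
    (hnear : ‖u - c‖ ≤ η / 2) (hfar : 2 - η / 2 ≤ ‖c + w‖) {s : ℝ} (hs : 0 ≤ s) :
    (1 - η) * (1 + s) ≤ ‖u + s • w‖ := by
  rcases le_or_gt s 1 with h1 | h1
  · have e : u + s • w = (c + w) + (u - c) + ((s - 1) • w) := by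
      rw [sub_smul, one_smul]; abel
    have h2 := norm_add3_ge (c + w) (u - c) ((s - 1) • w)
    rw [← e] at h2
    have h3 : ‖(s - 1) • w‖ = 1 - s := by
      rw [norm_smul, hw, Real.norm_eq_abs, abs_of_nonpos (by linarith)]; ring
    nlinarith
  · have e : u + s • w = s • (c + w) + (u - c) + ((1 - s) • c) := by
      rw [smul_add, sub_smul, one_smul]; abel
    have h2 := norm_add3_ge (s • (c + w)) (u - c) ((1 - s) • c)
    rw [← e] at h2
    have h3 : ‖(1 - s) • c‖ = s - 1 := by
      rw [norm_smul, hc, Real.norm_eq_abs, abs_of_nonpos (by linarith)]; ring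
    have h4 : ‖s • (c + w)‖ = s * ‖c + w‖ := by
      rw [norm_smul, Real.norm_eq_abs, abs_of_nonneg hs]
    nlinarith

lemma oct_step {Y : Type*} [NormedAddCommGroup Y] [NormedSpace ℝ Y]
    (hY : IsOctahedral Y) (E : Submodule ℝ Y) (hE : FiniteDimensional ℝ E)
    {η : ℝ} (hη : 0 < η) :
    ∃ z : Y, ‖z‖ = 1 ∧ ∀ e ∈ E, ∀ t : ℝ, (1 - η) * (‖e‖ + |t|) ≤ ‖e + t • z‖ := by
  classical
  haveI := hE
  -- a finite (η/2)-net of the sphere of E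
  have hcomp : IsCompact (sphere (0 : E) 1) := isCompact_sphere 0 1
  have htb := hcomp.totallyBounded
  have hd : {p : E × E | dist p.1 p.2 < η / 2} ∈ uniformity E :=
    dist_mem_uniformity (by linarith)
  obtain ⟨t, hts, htfin, htcov⟩ := htb.exists_subset hd
  -- the finite set of unit vectors in Y
  haveI : Fintype t := htfin.fintype
  set C : Finset Y := (htfin.toFinset.image (fun v : E => (v : Y))) ∪
      (htfin.toFinset.image (fun v : E => -(v : Y))) with hC
  have hCnorm : ∀ c ∈ C, ‖c‖ = 1 := by
    intro c hc
    simp only [hC, Finset.mem_union, Finset.mem_image, Set.Finite.mem_toFinset] at hc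
    rcases hc with ⟨v, hv, rfl⟩ | ⟨v, hv, rfl⟩
    · have := hts hv
      rw [mem_sphere_iff_norm, sub_zero] at this
      simpa using congrArg id this
    · have := hts hv
      rw [mem_sphere_iff_norm, sub_zero] at this
      simp only [norm_neg]
      simpa using congrArg id this
  -- apply octahedrality
  obtain ⟨z, hz1, hzfar⟩ := hY (η / 2) (by linarith) C.card
    (fun n => (C.equivFin.symm n : Y)) (fun n => hCnorm _ (C.equivFin.symm n).2)
  refine ⟨z, hz1, ?_⟩
  have hzfar' : ∀ c ∈ C, 2 - η / 2 ≤ ‖c - z‖ := by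
    intro c hc
    have := hzfar (C.equivFin ⟨c, hc⟩)
    simpa using this
  intro e he a
  rcases eq_or_ne e 0 with rfl | hne
  · simp only [norm_zero, zero_add]
    rw [norm_smul, Real.norm_eq_abs, hz1, mul_one]
    nlinarith [abs_nonneg a]
  · have hr : (0:ℝ) < ‖e‖ := norm_pos_iff.mpr hne
    -- the unit vector in direction e
    set eE : E := ⟨‖e‖⁻¹ • e, Submodule.smul_mem E _ he⟩ with heE
    have heE1 : ‖eE‖ = 1 := by
      simp only [heE, Submodule.coe_norm, norm_smul, Real.norm_eq_abs,
        abs_of_nonneg (inv_nonneg.mpr hr.le)]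
      field_simp
    have heEs : eE ∈ sphere (0 : E) 1 := by
      rwa [mem_sphere_iff_norm, sub_zero]
    obtain ⟨c₀, hc₀t, hc₀near⟩ := Set.mem_iUnion₂.1 (htcov heEs)
    have hc₀s := hts hc₀t
    have hc₀1 : ‖(c₀ : Y)‖ = 1 := by
      rw [mem_sphere_iff_norm, sub_zero] at hc₀s
      simpa [Submodule.coe_norm] using hc₀s
    have hnear : ‖(‖e‖⁻¹ • e) - (c₀ : Y)‖ ≤ η / 2 := by
      have : dist eE c₀ < η / 2 := hc₀near
      rw [dist_eq_norm] at this
      have : ‖(eE - c₀ : E)‖ ≤ η / 2 := this.le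
      simpa [heE, Submodule.coe_norm] using this
    -- pick the sign
    have key : ∀ s : ℝ, 0 ≤ s → ∀ w : Y, ‖w‖ = 1 → (2 - η/2 ≤ ‖(c₀ : Y) + w‖) →
        (1 - η) * (‖e‖ + s * ‖e‖) ≤ ‖e + (s * ‖e‖) • w‖ := by
      intro s hs w hw hfw
      have h := est_aux hη hc₀1 hw hnear hfw hs
      have hscale : ‖e + (s * ‖e‖) • w‖ = ‖e‖ * ‖(‖e‖⁻¹ • e) + s • w‖ := by
        rw [← norm_smul_of_nonneg hr.le, smul_add, smul_smul, smul_smul]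
        rw [mul_comm s ‖e‖]
        field_simp
        rw [one_smul]
      rw [hscale]
      calc (1 - η) * (‖e‖ + s * ‖e‖) = ‖e‖ * ((1 - η) * (1 + s)) := by ring
      _ ≤ ‖e‖ * ‖(‖e‖⁻¹ • e) + s • w‖ := by
          apply mul_le_mul_of_nonneg_left h hr.le
    rcases le_or_gt 0 a with ha | ha
    · -- use w = z ; need ‖c₀ + z‖ ≥ 2 - η/2, from -c₀ ∈ C
      have hmem : -(c₀ : Y) ∈ C := by
        simp only [hC, Finset.mem_union, Finset.mem_image, Set.Finite.mem_toFinset]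
        exact Or.inr ⟨c₀, hc₀t, rfl⟩
      have hfw : 2 - η/2 ≤ ‖(c₀ : Y) + z‖ := by
        have := hzfar' _ hmem
        have e1 : -(c₀:Y) - z = -((c₀:Y) + z) := by abel
        rw [e1, norm_neg] at this
        exact this
      have := key (a / ‖e‖) (div_nonneg ha hr.le) z hz1 hfw
      rw [div_mul_cancel₀ _ hr.ne'] at this
      rwa [abs_of_nonneg ha]
    · -- a < 0 : use w = -z
      have hmem : (c₀ : Y) ∈ C := by
        simp only [hC, Finset.mem_union, Finset.mem_image, Set.Finite.mem_toFinset]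
        exact Or.inl ⟨c₀, hc₀t, rfl⟩
      have hfw : 2 - η/2 ≤ ‖(c₀ : Y) + -z‖ := by
        have := hzfar' _ hmem
        simpa [sub_eq_add_neg] using this
      have := key ((-a) / ‖e‖) (div_nonneg (by linarith) hr.le) (-z) (by simpa using hz1) hfw
      rw [div_mul_cancel₀ _ hr.ne'] at this
      rw [abs_of_neg ha]
      have e2 : e + (-a) • (-z) = e + a • z := by
        rw [neg_smul, smul_neg, neg_neg]
      rwa [e2] at this

lemma oct_seq {Y : Type*} [NormedAddCommGroup Y] [NormedSpace ℝ Y]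
    (hY : IsOctahedral Y) (E₀ : Submodule ℝ Y) (hE₀ : FiniteDimensional ℝ E₀)
    {δ : ℝ} (hδ : 0 < δ) (hδ1 : δ ≤ 1) :
    ∃ y : ℕ → Y, (∀ k, ‖y k‖ = 1) ∧ ∀ (K : ℕ) (x : Y), x ∈ E₀ → ∀ b : ℕ → ℝ,
      (1 - δ) * (‖x‖ + ∑ k ∈ Finset.range K, |b k|) ≤
        ‖x + ∑ k ∈ Finset.range K, b k • y k‖ := by
  classical
  set η : ℕ → ℝ := fun k => δ / 2 ^ (k + 1) with hηdef
  have hηpos : ∀ k, 0 < η k := fun k => by positivity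
  have pick : ∀ (E : Submodule ℝ Y), FiniteDimensional ℝ E → ∀ k : ℕ,
      { z : Y // ‖z‖ = 1 ∧ ∀ e ∈ E, ∀ t : ℝ, (1 - η k) * (‖e‖ + |t|) ≤ ‖e + t • z‖ } :=
    fun E hE k => Classical.indefiniteDescription _ (oct_step hY E hE (hηpos k))
  let G : ℕ → {E : Submodule ℝ Y // FiniteDimensional ℝ ↥E ∧ E₀ ≤ E} :=
    fun n => Nat.rec ⟨E₀, hE₀, le_rfl⟩
      (fun k prev =>
        ⟨prev.1 ⊔ Submodule.span ℝ {(pick prev.1 prev.2.1 k).1}, by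
          haveI := prev.2.1
          haveI : FiniteDimensional ℝ
              (Submodule.span ℝ ({(pick prev.1 prev.2.1 k).1} : Set Y)) :=
            FiniteDimensional.span_of_finite ℝ (Set.finite_singleton _)
          exact ⟨Submodule.finiteDimensional_sup _ _, le_trans prev.2.2 le_sup_left⟩⟩) n
  let y : ℕ → Y := fun k => (pick (G k).1 (G k).2.1 k).1
  have hGsucc : ∀ k, (G (k + 1)).1 = (G k).1 ⊔ Submodule.span ℝ {y k} := fun k => rfl
  have hymem : ∀ k, y k ∈ (G (k + 1)).1 := fun k => by
    rw [hGsucc]; exact Submodule.mem_sup_right (Submodule.subset_span rfl)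
  have hmono : Monotone (fun k => (G k).1) :=
    monotone_nat_of_le_succ (fun k => by rw [hGsucc]; exact le_sup_left)
  have hymem' : ∀ j k, j < k → y j ∈ (G k).1 := fun j k hjk => hmono hjk (hymem j)
  have hynorm : ∀ k, ‖y k‖ = 1 := fun k => (pick (G k).1 (G k).2.1 k).2.1
  have hyest : ∀ k, ∀ e ∈ (G k).1, ∀ t : ℝ,
      (1 - η k) * (‖e‖ + |t|) ≤ ‖e + t • y k‖ :=
    fun k => (pick (G k).1 (G k).2.1 k).2.2
  refine ⟨y, hynorm, ?_⟩
  -- partial sums of η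
  set c : ℕ → ℝ := fun K => ∑ k ∈ Finset.range K, η k with hcdef
  have hcnonneg : ∀ K, 0 ≤ c K := fun K =>
    Finset.sum_nonneg fun k _ => (hηpos k).le
  have hcle : ∀ K, c K ≤ δ := by
    intro K
    have h2 : ∀ k : ℕ, η k = (δ / 2) * (1 / 2) ^ k := by
      intro k
      rw [hηdef]
      simp [pow_succ, div_pow, one_div]
      ring
    calc c K = (δ / 2) * ∑ k ∈ Finset.range K, (1 / 2 : ℝ) ^ k := by
          rw [hcdef, Finset.mul_sum]; exact Finset.sum_congr rfl fun k _ => h2 k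
    _ ≤ (δ / 2) * 2 := by
          apply mul_le_mul_of_nonneg_left (sum_geometric_two_le K) (by linarith)
    _ = δ := by ring
  have main : ∀ (K : ℕ) (x : Y), x ∈ E₀ → ∀ b : ℕ → ℝ,
      (1 - c K) * (‖x‖ + ∑ k ∈ Finset.range K, |b k|) ≤
        ‖x + ∑ k ∈ Finset.range K, b k • y k‖ := by
    intro K
    induction K with
    | zero =>
      intro x hx b
      have h0 : c 0 = 0 := by simp [hcdef]
      simp [h0]
    | succ K ih =>
      intro x hx b
      have hsum : x + ∑ k ∈ Finset.range (K + 1), b k • y k =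
          (x + ∑ k ∈ Finset.range K, b k • y k) + b K • y K := by
        rw [Finset.sum_range_succ]; abel
      have hmem : (x + ∑ k ∈ Finset.range K, b k • y k) ∈ (G K).1 := by
        refine Submodule.add_mem _ ((G K).2.2 hx) ?_
        exact Submodule.sum_mem _ fun j hj =>
          Submodule.smul_mem _ _ (hymem' j K (Finset.mem_range.1 hj))
      have hstep := hyest K _ hmem (b K)
      have hIH := ih x hx b
      rw [hsum]
      set S := ‖x‖ + ∑ k ∈ Finset.range K, |b k| with hS
      have hSnn : 0 ≤ S := by
        rw [hS]
        have : (0:ℝ) ≤ ∑ k ∈ Finset.range K, |b k| :=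
          Finset.sum_nonneg fun k _ => abs_nonneg _
        positivity
      have hcK : c (K + 1) = c K + η K := Finset.sum_range_succ _ _
      have hbK : (0:ℝ) ≤ |b K| := abs_nonneg _
      have habs : ∑ k ∈ Finset.range (K+1), |b k| =
          (∑ k ∈ Finset.range K, |b k|) + |b K| := Finset.sum_range_succ _ _
      have hnorm : ‖x + ∑ k ∈ Finset.range K, b k • y k‖ ≥ (1 - c K) * S := hIH
      have h1 : (1 - η K) * (‖x + ∑ k ∈ Finset.range K, b k • y k‖ + |b K|) ≤
          ‖(x + ∑ k ∈ Finset.range K, b k • y k) + b K • y K‖ := hstep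
      have hcKle : c K + η K ≤ δ := by rw [← hcK]; exact hcle (K + 1)
      have hηK := hηpos K
      have hcKnn := hcnonneg K
      calc (1 - c (K + 1)) * (‖x‖ + ∑ k ∈ Finset.range (K+1), |b k|)
          = (1 - (c K + η K)) * (S + |b K|) := by rw [hcK, habs, hS]; ring
      _ ≤ (1 - η K) * ((1 - c K) * S + |b K|) := by
            nlinarith [mul_nonneg (mul_nonneg hηK.le hcKnn) hSnn, mul_nonneg hcKnn hbK]
      _ ≤ (1 - η K) * (‖x + ∑ k ∈ Finset.range K, b k • y k‖ + |b K|) := by nlinarith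
      _ ≤ _ := h1
  intro K x hx b
  have := main K x hx b
  have hS : (0:ℝ) ≤ ‖x‖ + ∑ k ∈ Finset.range K, |b k| := by
    have : (0:ℝ) ≤ ∑ k ∈ Finset.range K, |b k| :=
      Finset.sum_nonneg fun k _ => abs_nonneg _
    positivity
  nlinarith [hcle K, hcnonneg K]

set_option maxHeartbeats 1000000 in
lemma lp_embedding {Z : Type*} [NormedAddCommGroup Z] [NormedSpace ℝ Z] [CompleteSpace Z]
    (s : ℕ → Z) (hs1 : ∀ k, ‖s k‖ ≤ 1) {c : ℝ} (hc : 0 < c)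
    (hlow : ∀ (F : Finset ℕ) (a : ℕ → ℝ), c * (∑ k ∈ F, |a k|) ≤ ‖∑ k ∈ F, a k • s k‖) :
    ∃ W : Subspace ℝ Z, IsClosed (W : Set Z) ∧ Nonempty (W ≃L[ℝ] lp (fun _ : ℕ => ℝ) 1) := by
  classical
  haveI : Fact ((1:ℝ≥0∞) ≤ 1) := ⟨le_refl _⟩
  have htoReal : ((1:ℝ≥0∞)).toReal = 1 := by simp
  have hsummable : ∀ a : lp (fun _ : ℕ => ℝ) 1, Summable (fun k => ‖a k‖) := by
    intro a
    have := (lp.memℓp a).summable (p := 1) (by norm_num)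
    simpa using this
  have hsummable2 : ∀ a : lp (fun _ : ℕ => ℝ) 1, Summable (fun k => a k • s k) := by
    intro a
    apply Summable.of_norm_bounded (hsummable a)
    intro k
    rw [norm_smul]
    calc ‖a k‖ * ‖s k‖ ≤ ‖a k‖ * 1 := by
          exact mul_le_mul_of_nonneg_left (hs1 k) (norm_nonneg _)
    _ = ‖a k‖ := mul_one _
  set Tfun : lp (fun _ : ℕ => ℝ) 1 → Z := fun a => ∑' k, a k • s k with hTfun
  have hadd : ∀ a b : lp (fun _ : ℕ => ℝ) 1, Tfun (a + b) = Tfun a + Tfun b := by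
    intro a b
    rw [hTfun]
    simp only [lp.coeFn_add, Pi.add_apply, add_smul]
    exact Summable.tsum_add (hsummable2 a) (hsummable2 b)
  have hsmul : ∀ (r : ℝ) (a : lp (fun _ : ℕ => ℝ) 1), Tfun (r • a) = r • Tfun a := by
    intro r a
    rw [hTfun]
    simp only [lp.coeFn_smul, Pi.smul_apply, smul_eq_mul, ← smul_smul]
    exact Summable.tsum_const_smul r (hsummable2 a)
  set T : lp (fun _ : ℕ => ℝ) 1 →ₗ[ℝ] Z :=
    { toFun := Tfun, map_add' := hadd, map_smul' := hsmul } with hT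
  have hnorma : ∀ a : lp (fun _ : ℕ => ℝ) 1, ‖a‖ = ∑' k, ‖a k‖ := by
    intro a
    rw [lp.norm_eq_tsum_rpow (by norm_num) a]
    simp
  have hbound : ∀ a, ‖T a‖ ≤ 1 * ‖a‖ := by
    intro a
    rw [one_mul, hnorma]
    calc ‖T a‖ ≤ ∑' k, ‖a k • s k‖ := norm_tsum_le_tsum_norm (by
          apply Summable.of_nonneg_of_le (fun k => norm_nonneg _) _ (hsummable a)
          intro k
          rw [norm_smul]
          nlinarith [norm_nonneg (a k), hs1 k, norm_nonneg (s k)])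
    _ ≤ ∑' k, ‖a k‖ := by
          apply Summable.tsum_le_tsum _ _ (hsummable a)
          · intro k
            rw [norm_smul]
            nlinarith [norm_nonneg (a k), hs1 k, norm_nonneg (s k)]
          · apply Summable.of_nonneg_of_le (fun k => norm_nonneg _) _ (hsummable a)
            intro k
            rw [norm_smul]
            nlinarith [norm_nonneg (a k), hs1 k, norm_nonneg (s k)]
  set T' : lp (fun _ : ℕ => ℝ) 1 →L[ℝ] Z := T.mkContinuous 1 hbound with hT'
  have hT'app : ∀ a, T' a = Tfun a := fun a => rfl
  -- T on single
  have hsingle : ∀ (i : ℕ) (x : ℝ), Tfun (lp.single 1 i x) = x • s i := by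
    intro i x
    have hz : ∀ k, k ≠ i → (lp.single (E := fun _ : ℕ => ℝ) 1 i x) k • s k = 0 := by
      intro k hk
      rw [lp.single_apply_ne 1 i _ hk, zero_smul]
    have h0 : Tfun (lp.single 1 i x) =
        ∑' k, (lp.single (E := fun _ : ℕ => ℝ) 1 i x) k • s k := rfl
    rw [h0, tsum_eq_single i hz, lp.single_apply_self]
  -- lower bound on finite sums, then in general
  have hlow' : ∀ a : lp (fun _ : ℕ => ℝ) 1, c * ‖a‖ ≤ ‖T' a‖ := by
    intro a
    have hha := lp.hasSum_single (E := fun _ : ℕ => ℝ) (p := 1) (by norm_num) a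
    have hfin : ∀ F : Finset ℕ,
        c * ‖∑ i ∈ F, lp.single (E := fun _ : ℕ => ℝ) 1 i (a i)‖ ≤
          ‖T' (∑ i ∈ F, lp.single (E := fun _ : ℕ => ℝ) 1 i (a i))‖ := by
      intro F
      have h1 : T' (∑ i ∈ F, lp.single (E := fun _ : ℕ => ℝ) 1 i (a i)) =
          ∑ i ∈ F, a i • s i := by
        rw [map_sum]
        exact Finset.sum_congr rfl fun i _ => hsingle i (a i)
      have h2 : ‖∑ i ∈ F, lp.single (E := fun _ : ℕ => ℝ) 1 i (a i)‖ =
          ∑ i ∈ F, |a i| := by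
        have := lp.norm_sum_single (E := fun _ : ℕ => ℝ) (p := 1) (by norm_num) a F
        simpa using this
      rw [h1, h2]
      exact hlow F a
    -- take limits along the HasSum filter
    have htend : Filter.Tendsto (fun F : Finset ℕ =>
        ∑ i ∈ F, lp.single (E := fun _ : ℕ => ℝ) 1 i (a i)) Filter.atTop (nhds a) := hha
    have htend1 : Filter.Tendsto (fun F : Finset ℕ =>
        c * ‖∑ i ∈ F, lp.single (E := fun _ : ℕ => ℝ) 1 i (a i)‖) Filter.atTop
        (nhds (c * ‖a‖)) := by
      exact (htend.norm.const_mul c)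
    have htend2 : Filter.Tendsto (fun F : Finset ℕ =>
        ‖T' (∑ i ∈ F, lp.single (E := fun _ : ℕ => ℝ) 1 i (a i))‖) Filter.atTop
        (nhds ‖T' a‖) := by
      exact ((T'.continuous.tendsto a).comp htend).norm
    exact le_of_tendsto_of_tendsto' htend1 htend2 hfin
  -- antilipschitz, closed range
  have hanti : AntilipschitzWith (Real.toNNReal c⁻¹) T' := by
    apply T'.antilipschitz_of_bound
    intro x
    rw [Real.coe_toNNReal _ (by positivity), inv_mul_eq_div, le_div_iff₀ hc]
    nlinarith [hlow' x]
  have hclosedrange : IsClosed (Set.range T') := hanti.isClosed_range T'.uniformContinuous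
  set W : Subspace ℝ Z := LinearMap.range T'.toLinearMap with hW
  have hWclosed : IsClosed (W : Set Z) := by
    have h2 : (W : Set Z) = Set.range T'.toLinearMap := LinearMap.coe_range _
    rw [h2, ContinuousLinearMap.coe_coe]
    exact hclosedrange
  have hinj : Function.Injective T'.toLinearMap := hanti.injective
  set e₀ : lp (fun _ : ℕ => ℝ) 1 ≃ₗ[ℝ] W := LinearEquiv.ofInjective T'.toLinearMap hinj with he₀
  have hcont1 : Continuous e₀ := by
    apply Continuous.subtype_mk
    exact T'.continuous
  have hcont2 : Continuous e₀.symm := by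
    have hb : ∀ w : W, ‖e₀.symm.toLinearMap w‖ ≤ c⁻¹ * ‖w‖ := by
      intro w
      have key : ∀ a, ((e₀ a : W) : Z) = T' a := fun a =>
        LinearEquiv.ofInjective_apply _ a
      have h1 : T' (e₀.symm w) = (w : Z) := by
        rw [← key, e₀.apply_symm_apply]
      have := hlow' (e₀.symm w)
      rw [h1] at this
      have hwn : ‖(w : Z)‖ = ‖w‖ := rfl
      rw [hwn] at this
      have this2 : c * ‖(e₀.symm.toLinearMap) w‖ ≤ ‖w‖ := this
      rw [inv_mul_eq_div, le_div_iff₀ hc]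
      nlinarith [this2]
    have := (e₀.symm.toLinearMap.mkContinuous c⁻¹ hb).continuous
    exact this
  refine ⟨W, hWclosed, ⟨?_⟩⟩
  exact ({ e₀ with continuous_toFun := hcont1, continuous_invFun := hcont2 } :
    lp (fun _ : ℕ => ℝ) 1 ≃L[ℝ] W).symm

set_option maxHeartbeats 1000000 in
theorem octahedral_subspace_quotient_no_l1
    (Y : Type*) [NormedAddCommGroup Y] [NormedSpace ℝ Y] [CompleteSpace Y]
    (hY : IsOctahedral Y) (X : Subspace ℝ Y) (hXc : IsClosed (X : Set Y))
    (hq : ∀ W : Subspace ℝ (Y ⧸ X), IsClosed (W : Set (Y ⧸ X)) → ¬ Nonempty (W ≃L[ℝ] lp (fun _ : ℕ => ℝ) 1)) :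
    IsOctahedral X := by
  classical
  haveI : IsClosed (X : Set Y) := hXc
  intro ε hε N x hx
  set δ : ℝ := min ε 1 / 8 with hδdef
  have hδpos : 0 < δ := by
    rw [hδdef]; have := lt_min hε one_pos; positivity
  have hδε : 5 * δ ≤ ε := by
    rw [hδdef]
    have h1 : min ε 1 ≤ ε := min_le_left _ _
    linarith
  have hδ1 : δ ≤ 1 / 8 := by
    rw [hδdef]
    have h1 : min ε 1 ≤ 1 := min_le_right _ _
    linarith
  -- the octahedral sequence
  set E₀ : Submodule ℝ Y := Submodule.span ℝ (Set.range (fun n => (x n : Y))) with hE₀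
  have hE₀fd : FiniteDimensional ℝ E₀ :=
    FiniteDimensional.span_of_finite ℝ (Set.finite_range _)
  obtain ⟨y, hy1, hyest⟩ := oct_seq hY E₀ hE₀fd hδpos (by linarith)
  have hxmem : ∀ n, (x n : Y) ∈ E₀ := fun n => Submodule.subset_span ⟨n, rfl⟩
  have hxn1 : ∀ n, ‖(x n : Y)‖ = 1 := fun n => hx n
  -- the dichotomy
  by_cases hP : ∃ (F : Finset ℕ) (b : ℕ → ℝ),
      (∑ i ∈ F, max (b i) 0 = 1) ∧ (∑ i ∈ F, max (-b i) 0 = 1) ∧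
      ‖X.mkQ (∑ i ∈ F, b i • y i)‖ < δ
  · -- CASE 1 : a convex combination difference close to X
    obtain ⟨F, b, hbp, hbm, hbq⟩ := hP
    set v : Y := ∑ i ∈ F, b i • y i with hv
    set w : Y := (1/2 : ℝ) • v with hw
    have habs : ∑ i ∈ F, |b i| = 2 := by
      have : ∀ i, |b i| = max (b i) 0 + max (-b i) 0 := by
        intro i
        rcases le_total (b i) 0 with h | h
        · rw [abs_of_nonpos h, max_eq_right h, max_eq_left (by linarith), zero_add]
        · rw [abs_of_nonneg h, max_eq_left h, max_eq_right (by linarith), add_zero]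
      rw [Finset.sum_congr rfl fun i _ => this i, Finset.sum_add_distrib, hbp, hbm]
      norm_num
    set K : ℕ := F.sup id + 1 with hK
    have hFK : F ⊆ Finset.range K := by
      intro i hi
      rw [Finset.mem_range, hK]
      exact Nat.lt_succ_of_le (Finset.le_sup (f := id) hi)
    -- the general estimate specialised to coefficients supported on F
    have main : ∀ (x₀ : Y), x₀ ∈ E₀ → ∀ (a : ℕ → ℝ) (hs : ∀ i, i ∉ F → a i = 0),
        (1 - δ) * (‖x₀‖ + ∑ i ∈ F, |a i|) ≤ ‖x₀ + ∑ i ∈ F, a i • y i‖ := by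
      intro x₀ hx₀ a ha
      have e1 : ∑ i ∈ F, a i • y i = ∑ i ∈ Finset.range K, a i • y i :=
        Finset.sum_subset hFK (fun i _ hni => by rw [ha i hni, zero_smul])
      have e2 : ∑ i ∈ F, |a i| = ∑ i ∈ Finset.range K, |a i| :=
        Finset.sum_subset hFK (fun i _ hni => by rw [ha i hni, abs_zero])
      rw [e1, e2]
      exact hyest K x₀ hx₀ a
    -- ‖x n - w‖ ≥ 2(1-δ)
    have hfar : ∀ n, (1 - δ) * 2 ≤ ‖(x n : Y) - w‖ := by
      intro n
      set a : ℕ → ℝ := fun i => if i ∈ F then -(b i)/2 else 0 with ha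
      have h1 : ∑ i ∈ F, a i • y i = -w := by
        rw [hw, hv, Finset.smul_sum, ← Finset.sum_neg_distrib]
        refine Finset.sum_congr rfl fun i hi => ?_
        rw [ha]; simp only [if_pos hi]
        rw [smul_smul, ← neg_smul]; ring_nf
      have h2 : ∑ i ∈ F, |a i| = 1 := by
        have : ∀ i ∈ F, |a i| = |b i| / 2 := by
          intro i hi
          rw [ha]; simp only [if_pos hi]
          rw [abs_div, abs_neg]
          norm_num
        rw [Finset.sum_congr rfl this, ← Finset.sum_div, habs]
        norm_num
      have := main (x n) (hxmem n) a (fun i hni => by rw [ha]; simp [hni])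
      rw [h1, h2, hxn1 n] at this
      calc (1 - δ) * 2 = (1 - δ) * (1 + 1) := by ring
      _ ≤ ‖(x n : Y) + -w‖ := this
      _ = ‖(x n : Y) - w‖ := by rw [sub_eq_add_neg]
    -- ‖w‖ ≥ 1 - δ
    have hwlow : 1 - δ ≤ ‖w‖ := by
      set a : ℕ → ℝ := fun i => if i ∈ F then (b i)/2 else 0 with ha
      have h1 : ∑ i ∈ F, a i • y i = w := by
        rw [hw, hv, Finset.smul_sum]
        refine Finset.sum_congr rfl fun i hi => ?_
        rw [ha]; simp only [if_pos hi]
        rw [smul_smul]; ring_nf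
      have h2 : ∑ i ∈ F, |a i| = 1 := by
        have : ∀ i ∈ F, |a i| = |b i| / 2 := by
          intro i hi
          rw [ha]; simp only [if_pos hi]
          rw [abs_div]
          norm_num
        rw [Finset.sum_congr rfl this, ← Finset.sum_div, habs]
        norm_num
      have := main 0 (Submodule.zero_mem _) a (fun i hni => by rw [ha]; simp [hni])
      rw [h1, h2, norm_zero, zero_add] at this
      simpa using this
    -- ‖w‖ ≤ 1
    have hwup : ‖w‖ ≤ 1 := by
      rw [hw, norm_smul]
      have : ‖v‖ ≤ 2 := by
        rw [hv]
        calc ‖∑ i ∈ F, b i • y i‖ ≤ ∑ i ∈ F, ‖b i • y i‖ := norm_sum_le _ _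
        _ = ∑ i ∈ F, |b i| := by
            refine Finset.sum_congr rfl fun i _ => ?_
            rw [norm_smul, hy1 i, mul_one, Real.norm_eq_abs]
        _ = 2 := habs
      rw [Real.norm_eq_abs]
      rw [abs_of_nonneg (by norm_num : (0:ℝ) ≤ 1/2)]
      linarith
    -- w is close to X
    have hqw : ‖Submodule.Quotient.mk (p := X) w‖ < δ / 2 := by
      have h1 : Submodule.Quotient.mk (p := X) w = (1/2 : ℝ) • X.mkQ v := by
        rw [hw, ← Submodule.mkQ_apply, map_smul]
      rw [h1, norm_smul, Real.norm_eq_abs, abs_of_nonneg (by norm_num : (0:ℝ) ≤ 1/2)]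
      linarith
    obtain ⟨m, hmmk, hmnorm⟩ := Submodule.Quotient.norm_mk_lt
      (Submodule.Quotient.mk (p := X) w) (show 0 < δ - ‖Submodule.Quotient.mk (p := X) w‖ by linarith)
    have hmlt : ‖m‖ < δ := by linarith
    have hx'X : w - m ∈ X := by
      rw [← Submodule.Quotient.mk_eq_zero, Submodule.Quotient.mk_sub, hmmk, sub_self]
    set x' : Y := w - m with hx'
    have hwx' : ‖w - x'‖ < δ := by
      rw [hx']; simpa using hmlt
    have hx'low : 1 - 2*δ ≤ ‖x'‖ := by
      have := norm_sub_norm_le w x'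
      linarith [abs_le.1 (abs_norm_sub_norm_le w x')]
    have hx'up : ‖x'‖ ≤ 1 + δ := by
      have := norm_le_norm_add_norm_sub' x' w
      have h2 : ‖x' - w‖ < δ := by rw [norm_sub_rev]; exact hwx'
      linarith [norm_le_insert' w x']
    have hx'pos : 0 < ‖x'‖ := by linarith [hδ1]
    set zY : Y := ‖x'‖⁻¹ • x' with hzY
    have hzmem : zY ∈ X := Submodule.smul_mem _ _ hx'X
    have hznorm : ‖zY‖ = 1 := by
      rw [hzY, norm_smul, Real.norm_eq_abs, abs_of_nonneg (inv_nonneg.2 hx'pos.le)]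
      field_simp
    have hzx' : ‖x' - zY‖ ≤ 2 * δ := by
      have h1 : x' - zY = (1 - ‖x'‖⁻¹) • x' := by
        rw [hzY, sub_smul, one_smul]
      rw [h1, norm_smul, Real.norm_eq_abs]
      have h2 : |1 - ‖x'‖⁻¹| * ‖x'‖ = |‖x'‖ - 1| := by
        rw [← abs_of_nonneg hx'pos.le, ← abs_mul]
        congr 1
        field_simp
        rw [abs_of_nonneg hx'pos.le]; ring
      rw [h2, abs_sub_le_iff]
      constructor <;> linarith
    refine ⟨⟨zY, hzmem⟩, hznorm, ?_⟩
    intro n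
    have hcoe : ‖x n - (⟨zY, hzmem⟩ : X)‖ = ‖(x n : Y) - zY‖ := rfl
    rw [ge_iff_le, hcoe]
    have t1 : ‖(x n : Y) - w‖ ≤ ‖(x n : Y) - zY‖ + ‖zY - x'‖ + ‖x' - w‖ := by
      have := norm_add₃_le (a := (x n : Y) - zY) (b := zY - x') (c := x' - w)
      simpa using this
    have t2 : ‖zY - x'‖ ≤ 2*δ := by rw [norm_sub_rev]; exact hzx'
    have t3 : ‖x' - w‖ < δ := by rw [norm_sub_rev]; exact hwx'
    have t4 := hfar n
    linarith
  · -- CASE 2 : build a copy of ℓ¹ in the quotient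
    exfalso
    push_neg at hP
    -- scaled version
    have hlow0 : ∀ (F : Finset ℕ) (b : ℕ → ℝ) (S : ℝ), 0 < S →
        (∑ i ∈ F, max (b i) 0 = S) → (∑ i ∈ F, max (-b i) 0 = S) →
        δ * S ≤ ‖X.mkQ (∑ i ∈ F, b i • y i)‖ := by
      intro F b S hS h1 h2
      have key := hP F (fun i => b i / S)
      have e1 : ∑ i ∈ F, max (b i / S) 0 = 1 := by
        have : ∀ i, max (b i / S) 0 = max (b i) 0 / S := by
          intro i
          rw [show (0:ℝ) = 0 / S by simp, max_div_div_right hS.le]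
          simp
        rw [Finset.sum_congr rfl fun i _ => this i, ← Finset.sum_div, h1, div_self hS.ne']
      have e2 : ∑ i ∈ F, max (-(b i / S)) 0 = 1 := by
        have : ∀ i, max (-(b i / S)) 0 = max (-b i) 0 / S := by
          intro i
          rw [← neg_div, show (0:ℝ) = 0 / S by simp, max_div_div_right hS.le]
          simp
        rw [Finset.sum_congr rfl fun i _ => this i, ← Finset.sum_div, h2, div_self hS.ne']
      have e3 : ∑ i ∈ F, (b i / S) • y i = S⁻¹ • ∑ i ∈ F, b i • y i := by
        rw [Finset.smul_sum]
        refine Finset.sum_congr rfl fun i _ => ?_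
        rw [smul_smul, div_eq_inv_mul]
      have h4 := key e1 e2
      rw [e3, map_smul, norm_smul, Real.norm_eq_abs, abs_of_nonneg (inv_nonneg.2 hS.le)] at h4
      calc δ * S = S * δ := by ring
      _ ≤ S * (S⁻¹ * ‖X.mkQ (∑ i ∈ F, b i • y i)‖) := by
          exact mul_le_mul_of_nonneg_left h4 hS.le
      _ = ‖X.mkQ (∑ i ∈ F, b i • y i)‖ := by field_simp
    -- the ℓ¹ sequence in the quotient
    set sZ : ℕ → (Y ⧸ X) := fun k => (1/2 : ℝ) • (X.mkQ (y (2*k)) - X.mkQ (y (2*k+1))) with hsZ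
    have hs1 : ∀ k, ‖sZ k‖ ≤ 1 := by
      intro k
      rw [hsZ]
      simp only
      rw [norm_smul, Real.norm_eq_abs, abs_of_nonneg (by norm_num : (0:ℝ) ≤ 1/2)]
      have h1 : ‖X.mkQ (y (2*k))‖ ≤ 1 := by
        rw [Submodule.mkQ_apply]
        calc ‖(Submodule.Quotient.mk (y (2*k)) : Y ⧸ X)‖ ≤ ‖y (2*k)‖ :=
              Submodule.Quotient.norm_mk_le _ _
        _ = 1 := hy1 _
      have h2 : ‖X.mkQ (y (2*k+1))‖ ≤ 1 := by
        rw [Submodule.mkQ_apply]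
        calc ‖(Submodule.Quotient.mk (y (2*k+1)) : Y ⧸ X)‖ ≤ ‖y (2*k+1)‖ :=
              Submodule.Quotient.norm_mk_le _ _
        _ = 1 := hy1 _
      have h3 := norm_sub_le (X.mkQ (y (2*k))) (X.mkQ (y (2*k+1)))
      linarith
    -- the ℓ¹ lower bound
    have hlow : ∀ (F₀ : Finset ℕ) (a : ℕ → ℝ),
        (δ/2) * (∑ k ∈ F₀, |a k|) ≤ ‖∑ k ∈ F₀, a k • sZ k‖ := by
      intro F₀ a
      set Fe : Finset ℕ := F₀.image (fun k => 2*k) with hFe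
      set Fo : Finset ℕ := F₀.image (fun k => 2*k+1) with hFo
      have hdisj : Disjoint Fe Fo := by
        rw [Finset.disjoint_left]
        intro i hie hio
        rw [hFe, Finset.mem_image] at hie
        rw [hFo, Finset.mem_image] at hio
        obtain ⟨k1, _, hk1⟩ := hie
        obtain ⟨k2, _, hk2⟩ := hio
        omega
      set b : ℕ → ℝ := fun i => if i % 2 = 0 then a (i / 2) / 2 else -(a (i / 2)) / 2 with hb
      have hbe : ∀ k, b (2*k) = a k / 2 := by
        intro k
        rw [hb]
        have h1 : (2*k) % 2 = 0 := by omega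
        have h2 : (2*k) / 2 = k := by omega
        simp [h1, h2]
      have hbo : ∀ k, b (2*k+1) = -(a k) / 2 := by
        intro k
        rw [hb]
        have h1 : (2*k+1) % 2 = 1 := by omega
        have h2 : (2*k+1) / 2 = k := by omega
        simp [h1, h2]
      have hinj2 : ∀ k1 ∈ F₀, ∀ k2 ∈ F₀, 2*k1 = 2*k2 → k1 = k2 := by omega
      have hinj2' : ∀ k1 ∈ F₀, ∀ k2 ∈ F₀, 2*k1+1 = 2*k2+1 → k1 = k2 := by omega
      -- sums over the union
      have hsum : ∀ g : ℕ → ℝ → ℝ, True := fun _ => trivial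
      have hVe : ∑ i ∈ Fe, b i • y i = ∑ k ∈ F₀, (a k / 2) • y (2*k) := by
        rw [hFe, Finset.sum_image hinj2]
        exact Finset.sum_congr rfl fun k _ => by rw [hbe]
      have hVo : ∑ i ∈ Fo, b i • y i = ∑ k ∈ F₀, (-(a k) / 2) • y (2*k+1) := by
        rw [hFo, Finset.sum_image hinj2']
        exact Finset.sum_congr rfl fun k _ => by rw [hbo]
      set S : ℝ := (∑ k ∈ F₀, |a k|) / 2 with hS
      have hSnn : 0 ≤ S := by
        rw [hS]
        have : (0:ℝ) ≤ ∑ k ∈ F₀, |a k| := Finset.sum_nonneg fun k _ => abs_nonneg _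
        linarith
      rcases eq_or_lt_of_le hSnn with hS0 | hSpos
      · -- all coefficients vanish
        have hzero : ∑ k ∈ F₀, |a k| = 0 := by
          rw [hS] at hS0; linarith
        rw [hzero]
        simp [norm_nonneg]
      · -- positive mass : apply hlow0
        have hpos : ∑ i ∈ Fe ∪ Fo, max (b i) 0 = S := by
          rw [Finset.sum_union hdisj, hFe, hFo, Finset.sum_image hinj2,
            Finset.sum_image hinj2', ← Finset.sum_add_distrib, hS, Finset.sum_div]
          refine Finset.sum_congr rfl fun k _ => ?_
          rw [hbe k, hbo k]
          rcases le_total (a k) 0 with h | h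
          · rw [max_eq_right (by linarith), max_eq_left (by linarith), abs_of_nonpos h]; ring
          · rw [max_eq_left (by linarith), max_eq_right (by linarith), abs_of_nonneg h]; ring
        have hneg : ∑ i ∈ Fe ∪ Fo, max (-(b i)) 0 = S := by
          rw [Finset.sum_union hdisj, hFe, hFo, Finset.sum_image hinj2,
            Finset.sum_image hinj2', ← Finset.sum_add_distrib, hS, Finset.sum_div]
          refine Finset.sum_congr rfl fun k _ => ?_
          rw [hbe k, hbo k]
          rcases le_total (a k) 0 with h | h
          · rw [max_eq_left (by linarith), max_eq_right (by linarith), abs_of_nonpos h]; ring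
          · rw [max_eq_right (by linarith), max_eq_left (by linarith), abs_of_nonneg h]; ring
        have hmain := hlow0 (Fe ∪ Fo) b S hSpos hpos hneg
        have hqV : X.mkQ (∑ i ∈ Fe ∪ Fo, b i • y i) = ∑ k ∈ F₀, a k • sZ k := by
          rw [Finset.sum_union hdisj, hVe, hVo, map_add, map_sum, map_sum]
          rw [← Finset.sum_add_distrib]
          refine Finset.sum_congr rfl fun k _ => ?_
          simp only [hsZ, map_smul]
          module
        rw [hqV] at hmain
        calc (δ/2) * (∑ k ∈ F₀, |a k|) = δ * S := by rw [hS]; ring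
        _ ≤ ‖∑ k ∈ F₀, a k • sZ k‖ := hmain
    obtain ⟨W, hWclosed, hWequiv⟩ := lp_embedding sZ hs1 (by positivity : (0:ℝ) < δ/2) hlow
    exact hq W hWclosed hWequiv
end

section
/- Every octahedral Banach space has the property that for every ε > 0, every finite dimensional subspace E of Y, there exists y in the unit sphere of Y such that ‖x + λy‖ ≥ (1−ε)(‖x‖ + |λ|) for all x ∈ E and λ ∈ ℝ; consequently every octahedral Banach space contains an isomorphic copy of ℓ₁. -/
open TopologicalSpace Metric

lemma keyProp_of_octahedral {Y : Type*} [NormedAddCommGroup Y] [NormedSpace ℝ Y]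
    (hY : IsOctahedral Y) :
    ∀ ε : ℝ, 0 < ε → ∀ E : Subspace ℝ Y, FiniteDimensional ℝ E →
      ∃ y : Y, ‖y‖ = 1 ∧ ∀ x ∈ E, ∀ l : ℝ, ‖x + l • y‖ ≥ (1 - ε) * (‖x‖ + |l|) := by
  classical
  intro ε hε E hE
  set ε' := min ε 1 with hε'def
  have hε'pos : 0 < ε' := lt_min hε one_pos
  have hε'le1 : ε' ≤ 1 := min_le_right _ _
  have hε'leε : ε' ≤ ε := min_le_left _ _
  haveI := hE
  have hcomp : IsCompact (Subtype.val '' (sphere (0:E) 1)) :=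
    (isCompact_sphere (0:E) 1).image continuous_subtype_val
  obtain ⟨t, hts, htf, htcov⟩ := hcomp.finite_cover_balls (show (0:ℝ) < ε'/4 by linarith)
  set s := htf.toFinset with hs
  set N := s.card with hN
  set u : Fin N → Y := fun n => (s.equivFin.symm n : Y) with hu
  have humem : ∀ n, ‖u n‖ = 1 ∧ u n ∈ E := by
    intro n
    have h1 : (s.equivFin.symm n : Y) ∈ t := htf.mem_toFinset.mp (s.equivFin.symm n).2
    obtain ⟨w, hw, hweq⟩ := hts h1
    have hw1 : ‖w‖ = 1 := mem_sphere_zero_iff_norm.mp hw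
    constructor
    · rw [hu]; simp only; rw [← hweq]; exact hw1
    · rw [hu]; simp only; rw [← hweq]; exact w.2
  obtain ⟨z, hz1, hz2⟩ := hY (ε'/4) (by linarith) N (fun n => -(u n))
    (fun n => by rw [norm_neg]; exact (humem n).1)
  have hz2' : ∀ n, 2 - ε'/4 ≤ ‖u n + z‖ := by
    intro n
    have h := hz2 n
    rwa [show -(u n) - z = -(u n + z) by abel, norm_neg] at h
  have hsph : ∀ w : Y, w ∈ E → ‖w‖ = 1 → 2 - ε'/2 ≤ ‖w + z‖ := by
    intro w hwE hw1
    have hwS : w ∈ Subtype.val '' sphere (0:E) 1 :=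
      ⟨⟨w, hwE⟩, mem_sphere_zero_iff_norm.mpr hw1, rfl⟩
    obtain ⟨p, hp, hwp⟩ := Set.mem_iUnion₂.mp (htcov hwS)
    have hpmem : p ∈ s := htf.mem_toFinset.mpr hp
    have hun : u (s.equivFin ⟨p, hpmem⟩) = p := by
      rw [hu]; simp
    have h1 : ‖w - p‖ < ε'/4 := by
      rw [mem_ball, dist_eq_norm] at hwp; exact hwp
    have h2 := hz2' (s.equivFin ⟨p, hpmem⟩)
    rw [hun] at h2
    have tri : ‖p + z‖ ≤ ‖w + z‖ + ‖p - w‖ := by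
      have : p + z = (w + z) + (p - w) := by abel
      rw [this]; exact norm_add_le _ _
    have h3 : ‖p - w‖ < ε'/4 := by rwa [← norm_neg, neg_sub]
    linarith
  have hB : ∀ x ∈ E, (1 - ε') * (‖x‖ + 1) ≤ ‖x + z‖ := by
    intro x hx
    rcases eq_or_ne x 0 with rfl | hx0
    · simp only [zero_add, hz1, norm_zero]
      nlinarith
    · have hr : 0 < ‖x‖ := norm_pos_iff.mpr hx0
      set r := ‖x‖ with hrdef
      set w := r⁻¹ • x with hwdef
      have hwE : w ∈ E := E.smul_mem _ hx
      have hw1 : ‖w‖ = 1 := by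
        rw [hwdef, norm_smul, Real.norm_eq_abs, abs_of_pos (inv_pos.mpr hr), ← hrdef,
          inv_mul_cancel₀ hr.ne']
      have hw := hsph w hwE hw1
      rcases le_total r 1 with h | h
      · have hwx : ‖w - x‖ = 1 - r := by
          have hw2 : w - x = (r⁻¹ - 1) • x := by rw [sub_smul, one_smul]
          have hc : (r⁻¹ - 1) * r = 1 - r := by
            rw [sub_mul, inv_mul_cancel₀ hr.ne', one_mul]
          calc ‖w - x‖ = |r⁻¹ - 1| * r := by rw [hw2, norm_smul, Real.norm_eq_abs]
            _ = |(r⁻¹ - 1) * r| := by rw [abs_mul, abs_of_pos hr]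
            _ = 1 - r := by rw [hc, abs_of_nonneg (by linarith)]
        have tri : ‖w + z‖ ≤ ‖x + z‖ + ‖w - x‖ := by
          have : w + z = (x + z) + (w - x) := by abel
          rw [this]; exact norm_add_le _ _
        nlinarith
      · have hkey : x + z = r • (w + r⁻¹ • z) := by
          rw [hwdef, smul_add, smul_smul, smul_smul, mul_inv_cancel₀ hr.ne', one_smul, one_smul]
        have hinv : r⁻¹ ≤ 1 := by
          rw [inv_le_one_iff₀]; right; exact h
        have h2 : ‖z - r⁻¹ • z‖ = 1 - r⁻¹ := by
          rw [show z - r⁻¹ • z = (1 - r⁻¹) • z from by rw [sub_smul, one_smul], norm_smul,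
            hz1, mul_one, Real.norm_eq_abs, abs_of_nonneg (by linarith)]
        have tri : ‖w + z‖ ≤ ‖w + r⁻¹ • z‖ + ‖z - r⁻¹ • z‖ := by
          have : w + z = (w + r⁻¹ • z) + (z - r⁻¹ • z) := by abel
          rw [this]; exact norm_add_le _ _
        have hxz : ‖x + z‖ = r * ‖w + r⁻¹ • z‖ := by
          rw [hkey, norm_smul, Real.norm_eq_abs, abs_of_pos hr]
        have hrinv : r * r⁻¹ = 1 := mul_inv_cancel₀ hr.ne'
        nlinarith [norm_nonneg (w + r⁻¹ • z)]
  refine ⟨z, hz1, ?_⟩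
  intro x hx l
  have h1ε' : 0 ≤ 1 - ε' := by linarith
  rcases eq_or_ne l 0 with rfl | hl
  · simp only [abs_zero, add_zero, zero_smul]
    nlinarith [norm_nonneg x]
  · have hla : 0 < |l| := abs_pos.mpr hl
    have hsp : x + l • z = l • (l⁻¹ • x + z) := by
      rw [smul_add, smul_smul, mul_inv_cancel₀ hl, one_smul]
    have hx' : l⁻¹ • x ∈ E := E.smul_mem _ hx
    have hB2 := hB _ hx'
    have hnx : ‖l⁻¹ • x‖ = |l|⁻¹ * ‖x‖ := by rw [norm_smul, Real.norm_eq_abs, abs_inv]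
    rw [hnx] at hB2
    rw [ge_iff_le, hsp, norm_smul, Real.norm_eq_abs]
    have h3 := mul_le_mul_of_nonneg_left hB2 hla.le
    have hll : |l| * |l|⁻¹ = 1 := mul_inv_cancel₀ hla.ne'
    have h4 : |l| * ((1 - ε') * (|l|⁻¹ * ‖x‖ + 1)) = (1 - ε') * (‖x‖ + |l|) := by
      linear_combination (1 - ε') * ‖x‖ * hll
    have h5 : (1 - ε) * (‖x‖ + |l|) ≤ (1 - ε') * (‖x‖ + |l|) := by
      nlinarith [norm_nonneg x, abs_nonneg l]
    rw [h4] at h3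
    linarith

section Aux
variable {Y : Type*} [NormedAddCommGroup Y] [NormedSpace ℝ Y]

/-- key property -/
def KeyProp (Y : Type*) [NormedAddCommGroup Y] [NormedSpace ℝ Y] : Prop :=
  ∀ ε : ℝ, 0 < ε → ∀ E : Subspace ℝ Y, FiniteDimensional ℝ E →
      ∃ y : Y, ‖y‖ = 1 ∧ ∀ x ∈ E, ∀ l : ℝ, ‖x + l • y‖ ≥ (1 - ε) * (‖x‖ + |l|)

noncomputable def dlt (n : ℕ) : ℝ := (1/2 : ℝ) ^ (n + 2)

lemma dlt_pos (n : ℕ) : 0 < dlt n := by unfold dlt; positivity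

lemma dlt_lt_one (n : ℕ) : dlt n < 1 := by
  have : (1/2 : ℝ) ^ (n+2) < 1 := by
    apply pow_lt_one₀ (by norm_num) (by norm_num) (by omega)
  simpa [dlt] using this

lemma exists_goodExt (hk : KeyProp Y) {n : ℕ} (v : Fin n → Y) {ε : ℝ} (hε : 0 < ε) :
    ∃ y : Y, ‖y‖ = 1 ∧ ∀ x ∈ Submodule.span ℝ (Set.range v), ∀ l : ℝ,
      ‖x + l • y‖ ≥ (1 - ε) * (‖x‖ + |l|) := by
  have : FiniteDimensional ℝ (Submodule.span ℝ (Set.range v)) :=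
    FiniteDimensional.span_of_finite ℝ (Set.finite_range v)
  obtain ⟨y, h1, h2⟩ := hk ε hε (Submodule.span ℝ (Set.range v)) this
  exact ⟨y, h1, h2⟩

noncomputable def seqY (hk : KeyProp Y) : ∀ n : ℕ, Fin n → Y
  | 0 => Fin.elim0
  | (n+1) => Fin.snoc (seqY hk n)
      (Classical.choose (exists_goodExt hk (seqY hk n) (dlt_pos n)))

noncomputable def yvec (hk : KeyProp Y) (n : ℕ) : Y := seqY hk (n+1) (Fin.last n)

lemma yvec_eq (hk : KeyProp Y) (n : ℕ) :
    yvec hk n = Classical.choose (exists_goodExt hk (seqY hk n) (dlt_pos n)) := by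
  rw [yvec, seqY, Fin.snoc_last]

lemma seqY_eq (hk : KeyProp Y) : ∀ (n : ℕ) (i : Fin n), seqY hk n i = yvec hk i.1 := by
  intro n
  induction n with
  | zero => exact fun i => i.elim0
  | succ n ih =>
    intro i
    refine Fin.lastCases ?_ ?_ i
    · rfl
    · intro j
      rw [seqY, Fin.snoc_castSucc, ih j]
      rfl

lemma yvec_norm (hk : KeyProp Y) (n : ℕ) : ‖yvec hk n‖ = 1 := by
  rw [yvec_eq]
  exact (Classical.choose_spec (exists_goodExt hk (seqY hk n) (dlt_pos n))).1

lemma yvec_good (hk : KeyProp Y) (n : ℕ) :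
    ∀ x ∈ Submodule.span ℝ (Set.range (seqY hk n)), ∀ l : ℝ,
      ‖x + l • yvec hk n‖ ≥ (1 - dlt n) * (‖x‖ + |l|) := by
  rw [yvec_eq]
  exact (Classical.choose_spec (exists_goodExt hk (seqY hk n) (dlt_pos n))).2

noncomputable def cc (n : ℕ) : ℝ := ∏ i ∈ Finset.range n, (1 - dlt i)

lemma cc_pos (n : ℕ) : 0 < cc n := by
  apply Finset.prod_pos
  intro i _
  have := dlt_lt_one i
  linarith

lemma cc_le_one (n : ℕ) : cc n ≤ 1 := by
  apply Finset.prod_le_one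
  · intro i _; have := dlt_lt_one i; linarith
  · intro i _; have := dlt_pos i; linarith

lemma half_le_cc (n : ℕ) : 1/2 + (1/2:ℝ)^(n+1) ≤ cc n := by
  induction n with
  | zero => simp [cc]; norm_num
  | succ n ih =>
    rw [cc, Finset.prod_range_succ, ← cc]
    have ht : (0:ℝ) < (1/2:ℝ)^(n+1) := by positivity
    have ht2 : (1/2:ℝ)^(n+1) ≤ 1/2 := by
      calc (1/2:ℝ)^(n+1) ≤ (1/2:ℝ)^1 := by
            apply pow_le_pow_of_le_one (by norm_num) (by norm_num) (by omega)
        _ = 1/2 := by norm_num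
    have hd : dlt n = (1/2:ℝ)^(n+1) / 2 := by
      rw [dlt]; ring
    have hpow : (1/2:ℝ)^(n+1+1) = (1/2:ℝ)^(n+1)/2 := by ring
    have hdn : 0 ≤ 1 - dlt n := by have := dlt_lt_one n; linarith
    have h1 : (1/2 + (1/2:ℝ)^(n+1)) * (1 - dlt n) ≤ cc n * (1 - dlt n) :=
      mul_le_mul_of_nonneg_right ih hdn
    rw [hpow, hd]
    set t := (1/2:ℝ)^(n+1)
    nlinarith

lemma lower_bound (hk : KeyProp Y) :
    ∀ n (a : Fin n → ℝ), cc n * (∑ i, |a i|) ≤ ‖∑ i, a i • yvec hk i.1‖ := by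
  intro n
  induction n with
  | zero => intro a; simp
  | succ n ih =>
    intro a
    have hsplit : ∑ i : Fin (n+1), a i • yvec hk i.1
        = (∑ i : Fin n, a i.castSucc • yvec hk i.1) + a (Fin.last n) • yvec hk n := by
      rw [Fin.sum_univ_castSucc]
      rfl
    set x := ∑ i : Fin n, a i.castSucc • yvec hk i.1 with hx
    have hxmem : x ∈ Submodule.span ℝ (Set.range (seqY hk n)) := by
      apply Submodule.sum_mem
      intro i _
      apply Submodule.smul_mem
      apply Submodule.subset_span
      exact ⟨i, seqY_eq hk n i⟩
    have hgood := yvec_good hk n x hxmem (a (Fin.last n))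
    have hih := ih (fun i => a i.castSucc)
    have hsum : ∑ i : Fin (n+1), |a i| = (∑ i : Fin n, |a i.castSucc|) + |a (Fin.last n)| := by
      rw [Fin.sum_univ_castSucc]
    rw [hsplit, hsum, cc, Finset.prod_range_succ, ← cc]
    have hccpos := cc_pos n
    have hcc1 := cc_le_one n
    have hdpos := dlt_pos n
    have hd1 := dlt_lt_one n
    have habs : 0 ≤ |a (Fin.last n)| := abs_nonneg _
    have hsnn : 0 ≤ ∑ i : Fin n, |a i.castSucc| :=
      Finset.sum_nonneg fun i _ => abs_nonneg _
    have hih' : cc n * ∑ i : Fin n, |a i.castSucc| ≤ ‖x‖ := hih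
    nlinarith [norm_nonneg x, mul_nonneg (mul_nonneg (by linarith : (0:ℝ) ≤ 1 - dlt n)
      (by linarith : (0:ℝ) ≤ 1 - cc n)) habs,
      mul_le_mul_of_nonneg_left hih' (by linarith : (0:ℝ) ≤ 1 - dlt n)]

end Aux

section L1part
variable {Y : Type*} [NormedAddCommGroup Y] [NormedSpace ℝ Y] [CompleteSpace Y]

lemma l1_hasSum_norm (a : lp (fun _ : ℕ => ℝ) 1) : HasSum (fun n => ‖a n‖) ‖a‖ := by
  have h := lp.hasSum_norm (p := 1) (by norm_num) a
  simpa using h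

lemma l1_summable (hk : KeyProp Y) (a : lp (fun _ : ℕ => ℝ) 1) :
    Summable (fun n => a n • yvec hk n) := by
  apply Summable.of_norm
  have h : (fun n => ‖a n • yvec hk n‖) = fun n => ‖a n‖ := by
    funext n; rw [norm_smul, yvec_norm, mul_one]
  rw [h]
  exact (l1_hasSum_norm a).summable

noncomputable def Tlin (hk : KeyProp Y) : lp (fun _ : ℕ => ℝ) 1 →ₗ[ℝ] Y where
  toFun a := ∑' n, a n • yvec hk n
  map_add' a b := by
    dsimp only
    have h : ∀ n, ((a + b : lp (fun _ : ℕ => ℝ) 1) n) • yvec hk n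
        = a n • yvec hk n + b n • yvec hk n := by
      intro n
      rw [lp.coeFn_add]
      simp [add_smul]
    rw [tsum_congr h, Summable.tsum_add (l1_summable hk a) (l1_summable hk b)]
  map_smul' c a := by
    dsimp only
    have h : ∀ n, ((c • a : lp (fun _ : ℕ => ℝ) 1) n) • yvec hk n
        = c • (a n • yvec hk n) := by
      intro n
      rw [lp.coeFn_smul]
      simp [smul_smul]
    rw [tsum_congr h, Summable.tsum_const_smul c (l1_summable hk a)]
    rfl

lemma Tlin_bound (hk : KeyProp Y) (a : lp (fun _ : ℕ => ℝ) 1) : ‖Tlin hk a‖ ≤ 1 * ‖a‖ := by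
  have h : (fun n => ‖a n • yvec hk n‖) = fun n => ‖a n‖ := by
    funext n; rw [norm_smul, yvec_norm, mul_one]
  have h2 : ‖Tlin hk a‖ ≤ ∑' n, ‖a n • yvec hk n‖ := by
    apply norm_tsum_le_tsum_norm
    rw [h]; exact (l1_hasSum_norm a).summable
  rw [h] at h2
  rw [(l1_hasSum_norm a).tsum_eq] at h2
  linarith

lemma Tlin_lower (hk : KeyProp Y) (a : lp (fun _ : ℕ => ℝ) 1) : ‖a‖ ≤ 2 * ‖Tlin hk a‖ := by
  have hsum : HasSum (fun n => a n • yvec hk n) (Tlin hk a) := (l1_summable hk a).hasSum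
  have h1 := hsum.tendsto_sum_nat
  have h2 := (l1_hasSum_norm a).tendsto_sum_nat
  have key : ∀ m, (1/2 : ℝ) * ∑ i ∈ Finset.range m, ‖a i‖
      ≤ ‖∑ i ∈ Finset.range m, a i • yvec hk i‖ := by
    intro m
    have hl := lower_bound hk m (fun i : Fin m => a i)
    rw [Fin.sum_univ_eq_sum_range (fun i => a i • yvec hk i)] at hl
    have habs : ∀ i : Fin m, |a i.1| = ‖a i.1‖ := fun i => (Real.norm_eq_abs _).symm
    have hs : ∑ i : Fin m, |a i.1| = ∑ i ∈ Finset.range m, ‖a i‖ := by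
      rw [Finset.sum_congr rfl fun i _ => habs i]
      exact Fin.sum_univ_eq_sum_range (fun i => ‖a i‖) m
    rw [hs] at hl
    have hcc := half_le_cc m
    have hsnn : 0 ≤ ∑ i ∈ Finset.range m, ‖a i‖ :=
      Finset.sum_nonneg fun i _ => norm_nonneg _
    have hpow : (0:ℝ) < (1/2:ℝ)^(m+1) := by positivity
    nlinarith
  have h3 := h2.const_mul (1/2 : ℝ)
  have h4 := h1.norm
  have h5 := le_of_tendsto_of_tendsto' h3 h4 key
  linarith

end L1part

theorem contains_l1_of_keyProp
    (Y : Type*) [NormedAddCommGroup Y] [NormedSpace ℝ Y] [CompleteSpace Y]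
    (hk : KeyProp Y) :
    (∃ X : Subspace ℝ Y, IsClosed (X : Set Y) ∧
      Nonempty (X ≃L[ℝ] lp (fun _ : ℕ => ℝ) 1)) := by
  haveI : Fact ((1:ENNReal) ≤ 1) := ⟨le_rfl⟩
  let T : lp (fun _ : ℕ => ℝ) 1 →L[ℝ] Y := LinearMap.mkContinuous (Tlin hk) 1 (Tlin_bound hk)
  have hanti : AntilipschitzWith 2 T := by
    apply ContinuousLinearMap.antilipschitz_of_bound
    intro x
    have h := Tlin_lower hk x
    have hT : T x = Tlin hk x := rfl
    rw [hT]
    push_cast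
    exact h
  have hclosed : IsClosed (Set.range T) := hanti.isClosed_range T.uniformContinuous
  let X : Subspace ℝ Y := LinearMap.range (T : lp (fun _ : ℕ => ℝ) 1 →ₗ[ℝ] Y)
  have hXset : (X : Set Y) = Set.range T := by
    ext v
    simp [X, LinearMap.mem_range]
  have hXc : IsClosed (X : Set Y) := by rw [hXset]; exact hclosed
  refine ⟨X, hXc, ?_⟩
  haveI : CompleteSpace X := hXc.completeSpace_coe
  let Tr : lp (fun _ : ℕ => ℝ) 1 →L[ℝ] X :=
    T.codRestrict X (fun a => LinearMap.mem_range_self _ a)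
  have hker : LinearMap.ker (Tr : lp (fun _ : ℕ => ℝ) 1 →ₗ[ℝ] X) = ⊥ := by
    rw [ContinuousLinearMap.ker_codRestrict]
    exact LinearMap.ker_eq_bot.mpr hanti.injective
  have hrange : LinearMap.range (Tr : lp (fun _ : ℕ => ℝ) 1 →ₗ[ℝ] X) = ⊤ := by
    rw [LinearMap.range_eq_top]
    rintro ⟨v, hv⟩
    obtain ⟨a, ha⟩ := hv
    exact ⟨a, Subtype.ext ha⟩
  exact ⟨(ContinuousLinearEquiv.ofBijective Tr hker hrange).symm⟩

theorem octahedral_findim_and_contains_l1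
    (Y : Type*) [NormedAddCommGroup Y] [NormedSpace ℝ Y] [CompleteSpace Y]
    (hY : IsOctahedral Y) :
    (∀ ε : ℝ, 0 < ε → ∀ E : Subspace ℝ Y, FiniteDimensional ℝ E →
      ∃ y : Y, ‖y‖ = 1 ∧ ∀ x ∈ E, ∀ l : ℝ, ‖x + l • y‖ ≥ (1 - ε) * (‖x‖ + |l|)) ∧
    (∃ X : Subspace ℝ Y, IsClosed (X : Set Y) ∧
      Nonempty (X ≃L[ℝ] lp (fun _ : ℕ => ℝ) 1)) := by
  have hk : KeyProp Y := keyProp_of_octahedral hY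
  exact ⟨hk, contains_l1_of_keyProp Y hk⟩
end
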